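/- Let S be a string over an alphabet of size σ with finitely many k-th order entropies defined. If a parsing algorithm outputs an m-bounded parsing Y_S minimizing ∑_{y ∈ Y_S} -log₂ p_{H₀}(y) with p_{H₀}(y) = (1/m)·cnt(y)/|S|, then for every 0 ≤ k < m: |Y_S|·H₀(Y_S) ≤ |S|·H_k(S) + |Y_S|·log₂ m + |Y_S|·k·log₂ σ. -/

import Mathlib

open Finset

/-- Zeroth order empirical entropy of a string. -/
noncomputable def H0 {α : Type*} [DecidableEq α] (w : List α) : ℝ :=
  -∑ s ∈ w.toFinset,
    ((w.count s : ℝ) / (w.length : ℝ)) * Real.logb 2 ((w.count s : ℝ) / (w.length : ℝ))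

/-- `cnt S w` = number of occurrences of the word `w` as a substring of `S`. -/
def cnt {Γ : Type*} [DecidableEq Γ] (S w : List Γ) : ℕ :=
  ((Finset.range S.length).filter
    (fun i => (S.drop i).take w.length = w ∧ i + w.length ≤ S.length)).card

/-- `Sctx S w` = letters of `S` immediately following an occurrence of `w`. -/
def Sctx {Γ : Type*} [DecidableEq Γ] (S w : List Γ) : List Γ :=
  (List.range S.length).filterMap (fun i =>
    if (S.drop i).take w.length = w then (S.drop (i + w.length)).head? else none)

/-- `k`-th order empirical entropy: `|S|·H_k(S) = ∑_{w ∈ Σ^k} |S_w|·H₀(S_w)`. -/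
noncomputable def Hk {Γ : Type*} [DecidableEq Γ] [Fintype Γ] (S : List Γ) (k : ℕ) : ℝ :=
  (1 / (S.length : ℝ)) * ∑ f : Fin k → Γ,
    ((Sctx S (List.ofFn f)).length : ℝ) * H0 (Sctx S (List.ofFn f))

/-- Total cost `∑_{y ∈ Y} -log₂ p_{H₀}(y)` of a parsing, with
`p_{H₀}(y) = (1/m)·cnt(y)/|S|`. -/
noncomputable def pcost {Γ : Type*} [DecidableEq Γ] (S : List Γ) (m : ℕ)
    (Y : List (List Γ)) : ℝ :=
  (Y.map (fun y => - Real.logb 2 ((1 / (m : ℝ)) * (cnt S y : ℝ) / (S.length : ℝ)))).sum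

section PairsDef
variable {Γ : Type*} [DecidableEq Γ]

/-- context/character pairs of a word: `(y[i..i+k), y[i+k])` for `i+k < |y|`. -/
def pairs (k : ℕ) : List Γ → List (List Γ × Γ)
  | [] => []
  | a :: y =>
    (if h : k < (a :: y).length then [((a :: y).take k, (a :: y).get ⟨k, h⟩)] else [])
      ++ pairs k y

@[simp] lemma pairs_nil (k : ℕ) : pairs k ([] : List Γ) = [] := rfl

lemma pairs_cons (k : ℕ) (a : Γ) (y : List Γ) :
    pairs k (a :: y)
      = (if h : k < (a :: y).length then [((a :: y).take k, (a :: y).get ⟨k, h⟩)] else [])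
        ++ pairs k y := rfl

lemma pairs_eq_nil {k : ℕ} {y : List Γ} (h : y.length ≤ k) : pairs k y = [] := by
  induction y with
  | nil => rfl
  | cons a y ih =>
      rw [pairs_cons, dif_neg (by simpa using h), List.nil_append]
      exact ih (le_of_lt (by simpa using h))

lemma length_fst_of_mem_pairs {k : ℕ} {y : List Γ} {p : List Γ × Γ} (hp : p ∈ pairs k y) :
    p.1.length = k := by
  induction y with
  | nil => simp at hp
  | cons a y ih =>
      rw [pairs_cons] at hp
      rcases List.mem_append.1 hp with h | h
      · split at h
        · rename_i hlt
          simp only [List.mem_singleton] at h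
          subst h
          have hlt' : k ≤ y.length := by
            simp only [List.length_cons] at hlt; omega
          simp only [List.length_take, List.length_cons]
          omega
        · simp at h
      · exact ih h

lemma Sctx_cons (a : Γ) (y w : List Γ) :
    Sctx (a :: y) w =
      (if ((a :: y).take w.length) = w then (((a :: y).drop w.length).head?).toList else [])
        ++ Sctx y w := by
  have h2 : ((fun i => if ((a :: y).drop i).take w.length = w
        then ((a :: y).drop (i + w.length)).head? else none) ∘ Nat.succ)
      = fun i => if (y.drop i).take w.length = w then (y.drop (i + w.length)).head? else none := by
    funext i
    have h3 : Nat.succ i + w.length = (i + w.length) + 1 := by omega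
    simp [h3, List.drop_succ_cons]
  simp only [Sctx, List.length_cons, List.range_succ_eq_map, List.filterMap_cons,
    List.filterMap_map, h2, List.drop_zero, Nat.zero_add]
  by_cases hc : (a :: y).take w.length = w
  · simp only [hc, if_true]
    cases hh : ((a :: y).drop w.length).head? <;> simp [hh]
  · simp [hc]

/-- the characters following occurrences of `w` (`|w| = k`) are exactly
the second components of the pairs with first component `w`. -/
lemma Sctx_eq_pairs {k : ℕ} (S w : List Γ) (hw : w.length = k) :
    Sctx S w = ((pairs k S).filter (fun p => p.1 = w)).map Prod.snd := by
  induction S with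
  | nil => simp [Sctx]
  | cons a y ih =>
      rw [Sctx_cons, pairs_cons, List.filter_append, List.map_append, ← ih]
      congr 1
      by_cases hlt : k < (a :: y).length
      · rw [dif_pos hlt]
        by_cases hc : (a :: y).take w.length = w
        · have hget : ((a :: y).drop w.length).head? = some ((a :: y).get ⟨k, hlt⟩) := by
            rw [hw, List.head?_drop, List.getElem?_eq_getElem hlt, List.get_eq_getElem]
          have htk : (a :: y).take k = w := by rw [← hw, hc]
          simp [hc, hget, htk]
        · have htk : ¬ ((a :: y).take k = w) := by rw [← hw]; exact hc
          simp [hc, htk]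
      · rw [dif_neg hlt]
        by_cases hc : (a :: y).take w.length = w
        · have hnone : ((a :: y).drop w.length).head? = none := by
            have : (a :: y).length ≤ w.length := by rw [hw]; omega
            simp [List.drop_eq_nil_of_le this]
          simp [hc, hnone]
        · simp [hc]

lemma pairs_snoc (k : ℕ) (y : List Γ) (a : Γ) :
    pairs k (y ++ [a])
      = pairs k y ++ (if k ≤ y.length then [(y.drop (y.length - k), a)] else []) := by
  induction y with
  | nil =>
      by_cases hk : k = 0
      · subst hk; simp [pairs_cons]
      · rw [List.nil_append, pairs_cons, pairs_nil, dif_neg (by simp; omega),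
          if_neg (by simp; omega)]
  | cons b y ih =>
      have hcons : (b :: y) ++ [a] = b :: (y ++ [a]) := rfl
      rw [hcons, pairs_cons, ih, pairs_cons k b y]
      by_cases h1 : k ≤ y.length
      · have hA : k < (b :: (y ++ [a])).length := by simp; omega
        have hB : k < (b :: y).length := by simp; omega
        rw [dif_pos hA, dif_pos hB, if_pos h1, if_pos (show k ≤ (b :: y).length by simp; omega)]
        have hpair : ((b :: (y ++ [a])).take k, (b :: (y ++ [a])).get ⟨k, hA⟩)
            = ((b :: y).take k, (b :: y).get ⟨k, hB⟩) := by
          rw [Prod.mk.injEq]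
          constructor
          · show ((b :: y) ++ [a]).take k = _
            exact List.take_append_of_le_length (by simp; omega)
          · simp only [List.get_eq_getElem]
            exact List.getElem_append_left hB
        rw [hpair]
        have hd : (b :: y).drop ((b :: y).length - k) = y.drop (y.length - k) := by
          have h5 : (b :: y).length - k = (y.length - k) + 1 := by simp; omega
          rw [h5, List.drop_succ_cons]
        rw [hd]
        simp
      · rw [pairs_eq_nil (show y.length ≤ k by omega), if_neg h1]
        by_cases h2 : k = y.length + 1
        · subst h2
          rw [dif_pos (by simp), dif_neg (by simp), if_pos (by simp)]
          simp only [List.nil_append, List.append_nil]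
          have h6 : (b :: y).length - (y.length + 1) = 0 := by simp
          rw [h6, List.drop_zero]
          have ht : (b :: (y ++ [a])).take (y.length + 1) = b :: y := by
            show ((b :: y) ++ [a]).take (y.length + 1) = b :: y
            have h7 : (b :: y).length = y.length + 1 := rfl
            rw [← h7]
            exact List.take_left
          have hg2 : (b :: (y ++ [a])).get ⟨y.length + 1, by simp⟩ = a := by
            simp only [List.get_eq_getElem]
            show ((b :: y) ++ [a])[y.length + 1]'(by simp) = a
            rw [List.getElem_append_right (by simp)]
            simp
          rw [ht, hg2]
        · rw [dif_neg (by simp; omega), dif_neg (by simp; omega), if_neg (by simp; omega)]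
          simp

lemma filterMap_sublist {β γ : Type*} (l : List β) (g h : β → Option γ)
    (H : ∀ x ∈ l, g x = h x ∨ g x = none) : (l.filterMap g).Sublist (l.filterMap h) := by
  induction l with
  | nil => simp
  | cons b l ih =>
      have hbl := ih (fun x hx => H x (List.mem_cons_of_mem _ hx))
      rcases H b (List.mem_cons_self) with hb | hb
      · rw [List.filterMap_cons, List.filterMap_cons, hb]
        cases h b with
        | none => exact hbl
        | some c => exact hbl.cons₂ c
      · rw [List.filterMap_cons, hb]
        rw [List.filterMap_cons]
        cases h b with
        | none => exact hbl
        | some c => exact hbl.cons c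

lemma pairs_append_sublist (k : ℕ) (y z : List Γ) :
    (pairs k y ++ pairs k z).Sublist (pairs k (y ++ z)) := by
  induction y with
  | nil => simp
  | cons a y ih =>
      rw [show (a :: y) ++ z = a :: (y ++ z) from rfl, pairs_cons k a (y ++ z), pairs_cons k a y]
      by_cases h1 : k < (a :: y).length
      · have h2 : k < (a :: (y ++ z)).length := by simp at h1 ⊢; omega
        rw [dif_pos h1, dif_pos h2]
        have hpair : ((a :: y).take k, (a :: y).get ⟨k, h1⟩)
            = ((a :: (y ++ z)).take k, (a :: (y ++ z)).get ⟨k, h2⟩) := by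
          rw [Prod.mk.injEq]
          constructor
          · show _ = ((a :: y) ++ z).take k
            exact (List.take_append_of_le_length (by simp at h1 ⊢; omega)).symm
          · simp only [List.get_eq_getElem]
            exact (List.getElem_append_left h1).symm
        rw [hpair, List.append_assoc]
        exact List.Sublist.append_left ih _
      · rw [dif_neg h1, List.nil_append]
        have hy : pairs k y = [] := pairs_eq_nil (by simp at h1; omega)
        rw [hy, List.nil_append]
        have h3 := ih
        rw [hy, List.nil_append] at h3
        exact h3.trans (List.sublist_append_right _ _)

lemma pairs_flatten_sublist (k : ℕ) (Y : List (List Γ)) :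
    (Y.flatMap (pairs k)).Sublist (pairs k Y.flatten) := by
  induction Y with
  | nil => simp
  | cons y Y ih =>
      simp only [List.flatMap_cons, List.flatten_cons]
      exact ((List.Sublist.append_left ih _).trans (pairs_append_sublist k y Y.flatten))

end PairsDef

section Prob
variable {Γ : Type*} [DecidableEq Γ]

/-- empirical conditional probability of `a` after context `w`. -/
noncomputable def pr (S w : List Γ) (a : Γ) : ℝ :=
  ((Sctx S w).count a : ℝ) / ((Sctx S w).length : ℝ)

/-- empirical `k`-th order probability of the word `y` (given its first `k` letters). -/
noncomputable def qv (S : List Γ) (k : ℕ) (y : List Γ) : ℝ :=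
  ((pairs k y).map (fun p => pr S p.1 p.2)).prod

lemma pr_nonneg (S w : List Γ) (a : Γ) : 0 ≤ pr S w a := by
  unfold pr; positivity

lemma pr_le_one (S w : List Γ) (a : Γ) : pr S w a ≤ 1 := by
  unfold pr
  rcases Nat.eq_zero_or_pos (Sctx S w).length with h | h
  · simp [h]
  · rw [div_le_one (by exact_mod_cast h)]
    exact_mod_cast List.count_le_length

lemma pr_pos {S w : List Γ} {a : Γ} (h : a ∈ Sctx S w) : 0 < pr S w a := by
  unfold pr
  apply div_pos
  · exact_mod_cast List.count_pos_iff.2 h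
  · exact_mod_cast List.length_pos_iff.2 (List.ne_nil_of_mem h)

lemma qv_nonneg (S : List Γ) (k : ℕ) (y : List Γ) : 0 ≤ qv S k y := by
  unfold qv
  apply List.prod_nonneg
  intro x hx
  rcases List.mem_map.1 hx with ⟨p, _, rfl⟩
  exact pr_nonneg _ _ _

lemma qv_snoc (S : List Γ) (k : ℕ) (y : List Γ) (a : Γ) :
    qv S k (y ++ [a])
      = qv S k y * (if k ≤ y.length then pr S (y.drop (y.length - k)) a else 1) := by
  unfold qv
  rw [pairs_snoc, List.map_append, List.prod_append]
  congr 1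
  split <;> simp

lemma sum_pr_le [Fintype Γ] (S w : List Γ) : ∑ a : Γ, pr S w a ≤ 1 := by
  unfold pr
  rcases Nat.eq_zero_or_pos (Sctx S w).length with h | h
  · simp [h]
  · have hsum : ∑ a : Γ, ((Sctx S w).count a : ℝ) = ((Sctx S w).length : ℝ) := by
      rw [← Nat.cast_sum]
      congr 1
      rw [← List.sum_toFinset_count_eq_length]
      exact (Finset.sum_subset (Finset.subset_univ _)
        (fun a _ ha => List.count_eq_zero.2 (fun hmem => ha (List.mem_toFinset.2 hmem)))).symm
    rw [← Finset.sum_div, hsum, div_self (by positivity)]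

lemma sum_qv_le [Fintype Γ] (S : List Γ) (k : ℕ) : ∀ ℓ : ℕ,
    ∑ f : Fin ℓ → Γ, qv S k (List.ofFn f) ≤ (Fintype.card Γ : ℝ) ^ (min ℓ k)
  | 0 => by simp [qv]
  | (ℓ + 1) => by
      have hsnoc : ∀ (g : Fin ℓ → Γ) (a : Γ),
          List.ofFn (Fin.snoc g a) = List.ofFn g ++ [a] := by
        intro g a
        rw [List.ofFn_succ']
        simp [List.concat_eq_append]
      have key : ∑ f : Fin (ℓ + 1) → Γ, qv S k (List.ofFn f)
          = ∑ g : Fin ℓ → Γ, ∑ a : Γ, qv S k (List.ofFn g ++ [a]) := by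
        rw [← Fintype.sum_equiv (Fin.snocEquiv (fun _ => Γ))
          (fun p => qv S k (List.ofFn (Fin.snoc p.2 p.1))) (fun f => qv S k (List.ofFn f))
          (fun p => rfl)]
        rw [Fintype.sum_prod_type_right]
        exact Finset.sum_congr rfl (fun g _ => Finset.sum_congr rfl (fun a _ => by rw [hsnoc]))
      rw [key]
      by_cases hk : k ≤ ℓ
      · have hmin : min (ℓ + 1) k = k := by omega
        have hstep : ∀ g : Fin ℓ → Γ, ∑ a : Γ, qv S k (List.ofFn g ++ [a])
            ≤ qv S k (List.ofFn g) := by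
          intro g
          have : ∀ a : Γ, qv S k (List.ofFn g ++ [a])
              = qv S k (List.ofFn g) * pr S ((List.ofFn g).drop (ℓ - k)) a := by
            intro a
            rw [qv_snoc]
            simp [List.length_ofFn, hk]
          rw [Finset.sum_congr rfl (fun a _ => this a), ← Finset.mul_sum]
          calc qv S k (List.ofFn g) * ∑ a : Γ, pr S ((List.ofFn g).drop (ℓ - k)) a
              ≤ qv S k (List.ofFn g) * 1 :=
                mul_le_mul_of_nonneg_left (sum_pr_le _ _) (qv_nonneg _ _ _)
            _ = qv S k (List.ofFn g) := mul_one _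
        calc ∑ g : Fin ℓ → Γ, ∑ a : Γ, qv S k (List.ofFn g ++ [a])
            ≤ ∑ g : Fin ℓ → Γ, qv S k (List.ofFn g) := Finset.sum_le_sum (fun g _ => hstep g)
          _ ≤ (Fintype.card Γ : ℝ) ^ (min ℓ k) := sum_qv_le S k ℓ
          _ = (Fintype.card Γ : ℝ) ^ (min (ℓ + 1) k) := by congr 1; omega
      · have hstep : ∀ g : Fin ℓ → Γ, ∀ a : Γ,
            qv S k (List.ofFn g ++ [a]) = qv S k (List.ofFn g) := by
          intro g a
          rw [qv_snoc]
          simp [List.length_ofFn]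
          intro h
          omega
        have hmin1 : min ℓ k = ℓ := by omega
        have hmin2 : min (ℓ + 1) k = ℓ + 1 := by omega
        calc ∑ g : Fin ℓ → Γ, ∑ a : Γ, qv S k (List.ofFn g ++ [a])
            = ∑ g : Fin ℓ → Γ, (Fintype.card Γ : ℝ) * qv S k (List.ofFn g) := by
              refine Finset.sum_congr rfl (fun g _ => ?_)
              rw [Finset.sum_congr rfl (fun a _ => hstep g a), Finset.sum_const,
                Finset.card_univ, nsmul_eq_mul]
          _ = (Fintype.card Γ : ℝ) * ∑ g : Fin ℓ → Γ, qv S k (List.ofFn g) := by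
              rw [Finset.mul_sum]
          _ ≤ (Fintype.card Γ : ℝ) * (Fintype.card Γ : ℝ) ^ (min ℓ k) :=
              mul_le_mul_of_nonneg_left (sum_qv_le S k ℓ) (by positivity)
          _ = (Fintype.card Γ : ℝ) ^ (min (ℓ + 1) k) := by
              rw [hmin1, hmin2, pow_succ]
              ring

end Prob

section Gibbs

/-- Gibbs' inequality / entropy lemma: the empirical distribution minimizes the coding cost
against any sub-probability assignment. -/
lemma gibbs {α : Type*} [DecidableEq α] (w : List α) (Q : α → ℝ)
    (hpos : ∀ s ∈ w, 0 < Q s) (hsum : ∑ s ∈ w.toFinset, Q s ≤ 1) :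
    (w.length : ℝ) * H0 w ≤ (w.map (fun s => -Real.logb 2 (Q s))).sum := by
  rcases eq_or_ne w [] with rfl | hw
  · simp [H0]
  have hL : 0 < (w.length : ℝ) := by exact_mod_cast List.length_pos_iff.2 hw
  set L : ℝ := (w.length : ℝ) with hLdef
  have hc : ∀ s ∈ w.toFinset, 0 < ((w.count s : ℝ)) := by
    intro s hs
    exact_mod_cast List.count_pos_iff.2 (List.mem_toFinset.1 hs)
  have hcL : ∑ s ∈ w.toFinset, (w.count s : ℝ) = L := by
    rw [hLdef, ← Nat.cast_sum]
    exact_mod_cast List.sum_toFinset_count_eq_length w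
  have key : ∀ s ∈ w.toFinset,
      (w.count s : ℝ) * Real.log (Q s)
        ≤ (w.count s : ℝ) * Real.log ((w.count s : ℝ) / L) + (L * Q s - (w.count s : ℝ)) := by
    intro s hs
    have hcs := hc s hs
    have hQs := hpos s (List.mem_toFinset.1 hs)
    have hx : 0 < Q s * L / (w.count s : ℝ) := by positivity
    have h1 := Real.log_le_sub_one_of_pos hx
    have hlog : Real.log (Q s * L / (w.count s : ℝ))
        = Real.log (Q s) - Real.log ((w.count s : ℝ) / L) := by
      rw [show Q s * L / (w.count s : ℝ) = Q s / ((w.count s : ℝ) / L) by field_simp,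
        Real.log_div hQs.ne' (by positivity)]
    rw [hlog] at h1
    have h2 : (w.count s : ℝ) * (Real.log (Q s) - Real.log ((w.count s : ℝ) / L))
        ≤ (w.count s : ℝ) * (Q s * L / (w.count s : ℝ) - 1) :=
      mul_le_mul_of_nonneg_left h1 hcs.le
    have h3 : (w.count s : ℝ) * (Q s * L / (w.count s : ℝ) - 1) = L * Q s - (w.count s : ℝ) := by
      field_simp
    rw [h3] at h2
    linarith [h2]
  have keysum : ∑ s ∈ w.toFinset, (w.count s : ℝ) * Real.log (Q s)
      ≤ ∑ s ∈ w.toFinset, (w.count s : ℝ) * Real.log ((w.count s : ℝ) / L) := by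
    have h4 := Finset.sum_le_sum key
    have h5 : ∑ s ∈ w.toFinset, ((w.count s : ℝ) * Real.log ((w.count s : ℝ) / L)
          + (L * Q s - (w.count s : ℝ)))
        = (∑ s ∈ w.toFinset, (w.count s : ℝ) * Real.log ((w.count s : ℝ) / L))
          + (L * (∑ s ∈ w.toFinset, Q s) - L) := by
      rw [Finset.sum_add_distrib, Finset.sum_sub_distrib, ← Finset.mul_sum, hcL]
    rw [h5] at h4
    nlinarith [h4, hsum, hL]
  have hlog2 : (0:ℝ) < Real.log 2 := Real.log_pos one_lt_two
  have hlogb : ∑ s ∈ w.toFinset, (w.count s : ℝ) * Real.logb 2 (Q s)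
      ≤ ∑ s ∈ w.toFinset, (w.count s : ℝ) * Real.logb 2 ((w.count s : ℝ) / L) := by
    simp only [Real.logb, ← mul_div_assoc]
    rw [← Finset.sum_div, ← Finset.sum_div, div_le_div_iff_of_pos_right hlog2]
    exact keysum
  have hH : L * H0 w = -∑ s ∈ w.toFinset, (w.count s : ℝ) * Real.logb 2 ((w.count s : ℝ) / L) := by
    unfold H0
    rw [mul_neg, Finset.mul_sum]
    congr 1
    refine Finset.sum_congr rfl (fun s hs => ?_)
    rw [← hLdef, ← mul_assoc, mul_div_cancel₀ _ hL.ne']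
  have hneg : ∑ s ∈ w.toFinset, (w.count s : ℝ) * (-Real.logb 2 (Q s))
      = -∑ s ∈ w.toFinset, (w.count s : ℝ) * Real.logb 2 (Q s) := by
    rw [← Finset.sum_neg_distrib]
    exact Finset.sum_congr rfl (fun s _ => by ring)
  have hconv : (w.map (fun s => -Real.logb 2 (Q s))).sum
      = ∑ s ∈ w.toFinset, (w.count s : ℝ) * (-Real.logb 2 (Q s)) := by
    rw [Finset.sum_list_map_count]
    exact Finset.sum_congr rfl (fun s _ => by rw [nsmul_eq_mul])
  rw [hconv, hH, hneg]
  linarith [hlogb]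

lemma sum_fiber {β κ : Type*} [Fintype κ] [DecidableEq κ] (l : List β) (key : β → κ)
    (F : β → ℝ) :
    (l.map F).sum = ∑ c : κ, ((l.filter (fun b => key b = c)).map F).sum := by
  induction l with
  | nil => simp
  | cons b l ih =>
      have hsplit : ∀ c : κ, (((b :: l).filter (fun x => key x = c)).map F).sum
          = (if key b = c then F b else 0) + ((l.filter (fun x => key x = c)).map F).sum := by
        intro c
        by_cases h : key b = c
        · simp [List.filter_cons, h]
        · simp [List.filter_cons, h]
      rw [List.map_cons, List.sum_cons, ih, Finset.sum_congr rfl (fun c _ => hsplit c),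
        Finset.sum_add_distrib, Finset.sum_ite_eq Finset.univ (key b) (fun _ => F b)]
      simp

lemma list_sum_neg {β : Type*} (l : List β) (f : β → ℝ) :
    (l.map (fun x => -f x)).sum = -((l.map f).sum) := by
  induction l with
  | nil => simp
  | cons b l ih => simp [ih]; ring

lemma logb_list_prod (l : List ℝ) (h : ∀ x ∈ l, 0 < x) :
    Real.logb 2 l.prod = (l.map (Real.logb 2)).sum := by
  induction l with
  | nil => simp
  | cons x l ih =>
      have hx := h x (List.mem_cons_self)
      have hl : 0 < l.prod := List.prod_pos (fun y hy => h y (List.mem_cons_of_mem _ hy))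
      rw [List.prod_cons, Real.logb_mul hx.ne' hl.ne', List.map_cons, List.sum_cons,
        ih (fun y hy => h y (List.mem_cons_of_mem _ hy))]

lemma sum_neg_logb_count {Γ : Type*} [DecidableEq Γ] (L : List Γ) :
    ((L.map (fun a => -Real.logb 2 ((L.count a : ℝ) / (L.length : ℝ)))).sum)
      = (L.length : ℝ) * H0 L := by
  rcases eq_or_ne L [] with rfl | hL
  · simp [H0]
  have hlen : (0:ℝ) < (L.length : ℝ) := by exact_mod_cast List.length_pos_iff.2 hL
  rw [Finset.sum_list_map_count]
  unfold H0
  rw [mul_neg, Finset.mul_sum, ← Finset.sum_neg_distrib]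
  refine Finset.sum_congr rfl (fun s hs => ?_)
  rw [nsmul_eq_mul, ← mul_assoc, mul_div_cancel₀ _ hlen.ne']
  ring

end Gibbs

section Assembly
variable {Γ : Type*} [DecidableEq Γ]

lemma mem_pairs_snd_mem_Sctx {k : ℕ} {S : List Γ} {p : List Γ × Γ}
    (hp : p ∈ pairs k S) : p.2 ∈ Sctx S p.1 := by
  rw [Sctx_eq_pairs S p.1 (length_fst_of_mem_pairs hp)]
  exact List.mem_map.2 ⟨p, List.mem_filter.2 ⟨hp, by simp⟩, rfl⟩

lemma ofFn_getD (y : List Γ) (ℓ : ℕ) (h : y.length = ℓ) (d : Γ) :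
    List.ofFn (fun i : Fin ℓ => y.getD i d) = y := by
  apply List.ext_getElem (by simp [h])
  intro i h1 h2
  simp only [List.getElem_ofFn]
  exact List.getD_eq_getElem y d (by simp at h1; omega)

lemma list_sum_const_add {β : Type*} (l : List β) (c : ℝ) (f : β → ℝ) :
    (l.map (fun x => c + f x)).sum = (l.length : ℝ) * c + (l.map f).sum := by
  induction l with
  | nil => simp
  | cons b l ih =>
      simp only [List.map_cons, List.sum_cons, ih, List.length_cons]
      push_cast
      ring

lemma sum_map_flatMap {β γ : Type*} (l : List β) (g : β → List γ) (F : γ → ℝ) :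
    ((l.flatMap g).map F).sum = (l.map (fun b => ((g b).map F).sum)).sum := by
  induction l with
  | nil => simp
  | cons b l ih => simp [List.flatMap_cons, ih]

end Assembly

/-- If `Y` is an `m`-bounded parsing of `S` minimizing `∑_y -log₂ p_{H₀}(y)` over
all `m`-bounded parsings, then for every `0 ≤ k < m`:
`|Y|·H₀(Y) ≤ |S|·H_k(S) + |Y|·log₂ m + |Y|·k·log₂ σ`. -/
theorem algo_zero_bound_kth {Γ : Type*} [DecidableEq Γ] [Fintype Γ]
    (S : List Γ) (hS : S ≠ []) (m : ℕ) (hm : 1 ≤ m)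
    (Y : List (List Γ)) (hjoin : Y.flatten = S)
    (hb : ∀ y ∈ Y, y ≠ [] ∧ y.length ≤ m)
    (hmin : ∀ Y' : List (List Γ), Y'.flatten = S →
      (∀ y ∈ Y', y ≠ [] ∧ y.length ≤ m) → pcost S m Y ≤ pcost S m Y')
    (k : ℕ) (hk : k < m) :
    (Y.length : ℝ) * H0 Y
      ≤ (S.length : ℝ) * Hk S k + (Y.length : ℝ) * Real.logb 2 (m : ℝ)
        + (Y.length : ℝ) * (k : ℝ) * Real.logb 2 (Fintype.card Γ : ℝ) := by
  classical
  have hn : 0 < S.length := List.length_pos_iff.2 hS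
  have hnR : (0:ℝ) < (S.length : ℝ) := by exact_mod_cast hn
  have hΓ : Nonempty Γ := ⟨S.head hS⟩
  set d : Γ := S.head hS with hd
  have hcard : 0 < Fintype.card Γ := Fintype.card_pos_iff.2 hΓ
  have hσ1 : (1:ℝ) ≤ (Fintype.card Γ : ℝ) := by exact_mod_cast hcard
  have hσpos : (0:ℝ) < (Fintype.card Γ : ℝ) := by exact_mod_cast hcard
  have hmpos : (0:ℝ) < (m:ℝ) := by exact_mod_cast hm
  set σR : ℝ := (Fintype.card Γ : ℝ) with hσR
  set F : List Γ × Γ → ℝ := fun p => -Real.logb 2 (pr S p.1 p.2) with hF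
  set Q : List Γ → ℝ := fun y => (1/(m:ℝ)) * ((σR)⁻¹ ^ k * qv S k y) with hQ
  have hmemS : ∀ y ∈ Y, ∀ p ∈ pairs k y, p ∈ pairs k S := by
    intro y hy p hp
    have h1 : p ∈ Y.flatMap (pairs k) := List.mem_flatMap.2 ⟨y, hy, hp⟩
    have h2 := (pairs_flatten_sublist k Y).subset h1
    rwa [hjoin] at h2
  have hqvpos : ∀ y ∈ Y, 0 < qv S k y := by
    intro y hy
    apply List.prod_pos
    intro x hx
    rcases List.mem_map.1 hx with ⟨p, hp, rfl⟩
    exact pr_pos (mem_pairs_snd_mem_Sctx (hmemS y hy p hp))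
  have hQpos : ∀ y ∈ Y, 0 < Q y := by
    intro y hy
    exact mul_pos (by positivity) (mul_pos (by positivity) (hqvpos y hy))
  -- Kraft inequality for Q
  have hKraft : ∑ y ∈ Y.toFinset, Q y ≤ 1 := by
    have hmaps : ∀ y ∈ Y.toFinset, y.length ∈ Finset.Icc 1 m := by
      intro y hy
      have h1 := hb y (List.mem_toFinset.1 hy)
      simp only [Finset.mem_Icc]
      exact ⟨Nat.one_le_iff_ne_zero.2 (by simpa [List.length_eq_zero_iff] using h1.1), h1.2⟩
    rw [← Finset.sum_fiberwise_of_maps_to hmaps Q]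
    have hfib : ∀ ℓ ∈ Finset.Icc 1 m,
        ∑ y ∈ Y.toFinset.filter (fun y => y.length = ℓ), Q y ≤ 1/(m:ℝ) := by
      intro ℓ _
      set s := Y.toFinset.filter (fun y => y.length = ℓ) with hs
      have hsub : ∑ y ∈ s, qv S k y ≤ σR ^ (min ℓ k) := by
        set keyf : List Γ → (Fin ℓ → Γ) := fun y => fun i => y.getD i d with hkeyf
        have hinj : ∀ x ∈ s, ∀ z ∈ s, keyf x = keyf z → x = z := by
          intro x hx z hz hxz
          have hxlen : x.length = ℓ := by simpa using (Finset.mem_filter.1 hx).2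
          have hzlen : z.length = ℓ := by simpa using (Finset.mem_filter.1 hz).2
          rw [← ofFn_getD x ℓ hxlen d, ← ofFn_getD z ℓ hzlen d]
          exact congrArg List.ofFn hxz
        calc ∑ y ∈ s, qv S k y = ∑ f ∈ s.image keyf, qv S k (List.ofFn f) := by
              rw [Finset.sum_image hinj]
              exact Finset.sum_congr rfl (fun y hy => by
                rw [ofFn_getD y ℓ (by simpa using (Finset.mem_filter.1 hy).2) d])
          _ ≤ ∑ f : Fin ℓ → Γ, qv S k (List.ofFn f) :=
              Finset.sum_le_sum_of_subset_of_nonneg (Finset.subset_univ _)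
                (fun f _ _ => qv_nonneg _ _ _)
          _ ≤ σR ^ (min ℓ k) := sum_qv_le S k ℓ
      have h1 : ∑ y ∈ s, Q y = (1/(m:ℝ)) * ((σR)⁻¹^k * ∑ y ∈ s, qv S k y) := by
        simp only [hQ]
        rw [← Finset.mul_sum, ← Finset.mul_sum]
      rw [h1]
      have h2 : (σR)⁻¹^k * ∑ y ∈ s, qv S k y ≤ 1 := by
        have h3 : σR ^ (min ℓ k) ≤ σR ^ k := pow_le_pow_right₀ hσ1 (Nat.min_le_right ℓ k)
        calc (σR)⁻¹^k * ∑ y ∈ s, qv S k y ≤ (σR)⁻¹^k * σR^k :=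
              mul_le_mul_of_nonneg_left (hsub.trans h3) (by positivity)
          _ = 1 := by
              rw [inv_pow, inv_mul_cancel₀ (by positivity)]
      calc (1/(m:ℝ)) * ((σR)⁻¹^k * ∑ y ∈ s, qv S k y) ≤ (1/(m:ℝ)) * 1 :=
            mul_le_mul_of_nonneg_left h2 (by positivity)
        _ = 1/(m:ℝ) := mul_one _
    calc ∑ ℓ ∈ Finset.Icc 1 m, ∑ y ∈ Y.toFinset.filter (fun y => y.length = ℓ), Q y
        ≤ ∑ ℓ ∈ Finset.Icc 1 m, 1/(m:ℝ) := Finset.sum_le_sum hfib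
      _ = 1 := by
          rw [Finset.sum_const, Nat.card_Icc, nsmul_eq_mul]
          push_cast
          field_simp
  -- Gibbs
  have hG := gibbs Y Q hQpos hKraft
  -- per-phrase expansion of the cost
  have hexp : ∀ y ∈ Y, -Real.logb 2 (Q y)
      = (Real.logb 2 (m:ℝ) + (k:ℝ) * Real.logb 2 σR)
        + ((pairs k y).map F).sum := by
    intro y hy
    have hq := hqvpos y hy
    have hsum : Real.logb 2 (qv S k y)
        = ((pairs k y).map (fun p => Real.logb 2 (pr S p.1 p.2))).sum := by
      unfold qv
      rw [logb_list_prod _ (fun x hx => by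
        rcases List.mem_map.1 hx with ⟨p, hp, rfl⟩
        exact pr_pos (mem_pairs_snd_mem_Sctx (hmemS y hy p hp))), List.map_map]
      rfl
    have hFsum : ((pairs k y).map F).sum
        = -((pairs k y).map (fun p => Real.logb 2 (pr S p.1 p.2))).sum := by
      rw [← list_sum_neg (pairs k y) (fun p => Real.logb 2 (pr S p.1 p.2))]
    rw [hQ]
    rw [Real.logb_mul (by positivity) (by positivity),
      Real.logb_mul (by positivity) (ne_of_gt hq),
      one_div, Real.logb_inv, Real.logb_pow, Real.logb_inv, hsum, hFsum]
    ring
  -- total cost splits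
  have hsplit : (Y.map (fun y => -Real.logb 2 (Q y))).sum
      = (Y.length:ℝ) * Real.logb 2 (m:ℝ) + (Y.length:ℝ) * (k:ℝ) * Real.logb 2 σR
        + (Y.map (fun y => ((pairs k y).map F).sum)).sum := by
    rw [List.map_congr_left hexp, list_sum_const_add]
    ring
  -- flatten and compare with the pairs of S
  have hflat : (Y.map (fun y => ((pairs k y).map F).sum)).sum
      = ((Y.flatMap (pairs k)).map F).sum := (sum_map_flatMap Y (pairs k) F).symm
  have hsubl : ((Y.flatMap (pairs k)).map F).sum ≤ ((pairs k S).map F).sum := by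
    apply List.Sublist.sum_le_sum ((hjoin ▸ pairs_flatten_sublist k Y).map F)
    intro x hx
    rcases List.mem_map.1 hx with ⟨p, hp, rfl⟩
    have h1 := pr_pos (mem_pairs_snd_mem_Sctx hp)
    have h2 := pr_le_one S p.1 p.2
    have h3 := Real.logb_nonpos (b := 2) one_lt_two h1.le h2
    simp only [hF]
    linarith
  -- group the pairs of S by context
  have hgroup : ((pairs k S).map F).sum = (S.length:ℝ) * Hk S k := by
    rw [sum_fiber (pairs k S) (fun p => (fun i : Fin k => p.1.getD i d)) F]
    have hper : ∀ f : Fin k → Γ,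
        (((pairs k S).filter (fun p => (fun i : Fin k => p.1.getD i d) = f)).map F).sum
        = ((Sctx S (List.ofFn f)).length : ℝ) * H0 (Sctx S (List.ofFn f)) := by
      intro f
      have hfilter : (pairs k S).filter (fun p => (fun i : Fin k => p.1.getD i d) = f)
          = (pairs k S).filter (fun p => p.1 = List.ofFn f) := by
        apply List.filter_congr
        intro p hp
        have hlen := length_fst_of_mem_pairs hp
        simp only [decide_eq_decide]
        constructor
        · intro h
          rw [← ofFn_getD p.1 k hlen d]
          exact congrArg List.ofFn h
        · intro h
          rw [h]
          funext i
          rw [List.getD_eq_getElem _ d (by simp)]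
          simp
      rw [hfilter]
      have hmapF : ((pairs k S).filter (fun p => p.1 = List.ofFn f)).map F
          = (((pairs k S).filter (fun p => p.1 = List.ofFn f)).map Prod.snd).map
              (fun a => -Real.logb 2 (((Sctx S (List.ofFn f)).count a : ℝ)
                / ((Sctx S (List.ofFn f)).length : ℝ))) := by
        rw [List.map_map]
        apply List.map_congr_left
        intro p hp
        have hp1 : p.1 = List.ofFn f := by
          have := (List.mem_filter.1 hp).2
          simpa using this
        simp only [hF, Function.comp, pr, hp1]
      rw [hmapF, ← Sctx_eq_pairs S (List.ofFn f) (by simp)]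
      exact sum_neg_logb_count _
    rw [Finset.sum_congr rfl (fun f _ => hper f)]
    unfold Hk
    field_simp
  -- put everything together
  have hfinal : ((Y.flatMap (pairs k)).map F).sum ≤ (S.length:ℝ) * Hk S k := by
    rw [← hgroup]; exact hsubl
  calc (Y.length : ℝ) * H0 Y
      ≤ (Y.map (fun y => -Real.logb 2 (Q y))).sum := hG
    _ = (Y.length:ℝ) * Real.logb 2 (m:ℝ) + (Y.length:ℝ) * (k:ℝ) * Real.logb 2 σR
        + (Y.map (fun y => ((pairs k y).map F).sum)).sum := hsplit
    _ = (Y.length:ℝ) * Real.logb 2 (m:ℝ) + (Y.length:ℝ) * (k:ℝ) * Real.logb 2 σR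
        + ((Y.flatMap (pairs k)).map F).sum := by rw [hflat]
    _ ≤ (S.length : ℝ) * Hk S k + (Y.length : ℝ) * Real.logb 2 (m : ℝ)
        + (Y.length : ℝ) * (k : ℝ) * Real.logb 2 (Fintype.card Γ : ℝ) := by
        rw [hσR]
        linarith [hfinal]
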